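/- Let A ∈ ℝ^{n×n} be an invertible matrix such that sym(A) := (A + Aᵀ)/2 is positive definite. Then sym(A⁻¹) ⪯ [sym(A)]⁻¹, i.e., the matrix [sym(A)]⁻¹ − (A⁻¹ + (A⁻¹)ᵀ)/2 is positive semidefinite. -/

import Mathlib

open Matrix Finset

theorem stmt9 {n : ℕ}
    (A : Matrix (Fin n) (Fin n) ℝ)
    (hA_inv : IsUnit A.det)
    (hsym_pd : ((2⁻¹ : ℝ) • (A + Aᵀ)).PosDef) :
    (((2⁻¹ : ℝ) • (A + Aᵀ))⁻¹ - (2⁻¹ : ℝ) • (A⁻¹ + (A⁻¹)ᵀ)).PosSemidef := by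
  set S : Matrix (Fin n) (Fin n) ℝ := (2⁻¹ : ℝ) • (A + Aᵀ) with hSdef
  have hSsymm : Sᵀ = S := by
    have := hsym_pd.isHermitian
    simpa [Matrix.IsHermitian, conjTranspose_eq_transpose_of_trivial] using this
  have hSdetU : IsUnit S.det := isUnit_iff_isUnit_det S |>.mp hsym_pd.isUnit
  have hAA : A⁻¹ * A = 1 := nonsing_inv_mul A hA_inv
  have hAA' : A * A⁻¹ = 1 := mul_nonsing_inv A hA_inv
  have hSS : S⁻¹ * S = 1 := nonsing_inv_mul S hSdetU
  have hSS' : S * S⁻¹ = 1 := mul_nonsing_inv S hSdetU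
  have hTA : Aᵀ * (A⁻¹)ᵀ = 1 := by rw [← transpose_mul, hAA, transpose_one]
  have hTA' : (A⁻¹)ᵀ * Aᵀ = 1 := by rw [← transpose_mul, hAA', transpose_one]
  -- symmetrized inverse identity: A⁻¹ * S * (A⁻¹)ᵀ = 2⁻¹ • (A⁻¹ + (A⁻¹)ᵀ)
  have hsym : A⁻¹ * S * (A⁻¹)ᵀ = (2⁻¹ : ℝ) • (A⁻¹ + (A⁻¹)ᵀ) := by
    rw [hSdef]
    rw [Matrix.mul_smul, Matrix.smul_mul]
    congr 1
    rw [Matrix.mul_add, Matrix.add_mul, hAA, Matrix.mul_assoc A⁻¹ Aᵀ, hTA,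
      Matrix.mul_one, Matrix.one_mul, add_comm]
  set B : Matrix (Fin n) (Fin n) ℝ := (S - Aᵀ) * (A⁻¹)ᵀ with hBdef
  have hBT : Bᵀ = A⁻¹ * S - 1 := by
    rw [hBdef, transpose_mul, transpose_sub, hSsymm, transpose_transpose,
      transpose_transpose, Matrix.mul_sub, hAA]

  have hB : B = S * (A⁻¹)ᵀ - 1 := by
    rw [hBdef, Matrix.sub_mul, hTA]
  have key : Bᵀ * S⁻¹ * B = S⁻¹ - (2⁻¹ : ℝ) • (A⁻¹ + (A⁻¹)ᵀ) := by
    rw [hBT, hB]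
    have e1 : (A⁻¹ * S - 1) * S⁻¹ = A⁻¹ - S⁻¹ := by
      rw [Matrix.sub_mul, Matrix.mul_assoc, hSS', Matrix.mul_one, Matrix.one_mul]
    rw [e1, Matrix.sub_mul, Matrix.mul_sub, Matrix.mul_sub, Matrix.mul_one, Matrix.mul_one,
      ← Matrix.mul_assoc, hsym, ← Matrix.mul_assoc, hSS, Matrix.one_mul]
    module
  rw [← key]
  have hinv : (S⁻¹).PosSemidef := hsym_pd.inv.posSemidef
  have := hinv.conjTranspose_mul_mul_same B
  simpa [conjTranspose_eq_transpose_of_trivial] using this
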